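/- Let f be (n+1)-times differentiable on (a,b), x₀ ∈ (a,b), k ≠ 0 with x₀ + i·k ∈ (a,b) for i = 0,…,n. Then there exist ξ₁,…,ξₙ with ξᵢ strictly between x₀ and x₀ + i·k such that f⁽ⁿ⁾(x₀)·(−k)ⁿ = ∑_{i=0}^{n} C(n,i)(−1)^i f(x₀ + i·k) − ∑_{i=1}^{n} C(n,i)(−1)^i (f⁽ⁿ⁺¹⁾(ξᵢ)/(n+1)!)(i·k)^{n+1}. -/

import Mathlib

open Finset Set

section aux
open Nat Function fwdDiff

lemma fd_zero_fun (h : ℕ) (n : ℕ) (y : ℕ) : (fwdDiff h)^[n] (fun _ : ℕ ↦ (0:ℝ)) y = 0 := by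
  induction n generalizing y with
  | zero => simp
  | succ m ih => rw [Function.iterate_succ_apply']; simp [fwdDiff, ih]

lemma fd_pow (j : ℕ) : ∀ n, j ≤ n → ∀ y : ℕ,
    (fwdDiff (1:ℕ))^[n] (fun x : ℕ ↦ ((x:ℝ))^j) y = if n = j then (j ! : ℝ) else 0 := by
  induction j using Nat.strong_induction_on with
  | _ j IH =>
    intro n hn y
    match j, n with
    | 0, 0 => simp
    | 0, (m+1) =>
      rw [Function.iterate_succ_apply]
      rw [show (fwdDiff (1:ℕ)) (fun x : ℕ ↦ ((x:ℝ))^0) = (fun _ : ℕ ↦ (0:ℝ)) by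
        funext t; simp [fwdDiff]]
      rw [fd_zero_fun]
      simp
    | (j+1), (m+1) =>
      have hjm : j ≤ m := Nat.succ_le_succ_iff.mp hn
      rw [Function.iterate_succ_apply]
      have hdiff : (fwdDiff (1:ℕ)) (fun x : ℕ ↦ ((x:ℝ))^(j+1))
          = ∑ p ∈ range (j+1), (((j+1).choose p : ℝ)) • (fun x : ℕ ↦ ((x:ℝ))^p) := by
        funext t
        simp only [fwdDiff, Finset.sum_apply, Pi.smul_apply, smul_eq_mul]
        have hb := add_pow (t : ℝ) 1 (j+1)
        rw [Finset.sum_range_succ] at hb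
        push_cast
        rw [hb]
        simp only [one_pow, mul_one, Nat.choose_self, Nat.cast_one]
        ring_nf
      rw [hdiff, fwdDiff_iter_finset_sum, Finset.sum_apply]
      have hcong : ∀ p ∈ range (j+1),
          ((fwdDiff (1:ℕ))^[m] ((((j+1).choose p : ℝ)) • (fun x : ℕ ↦ ((x:ℝ))^p))) y
          = (((j+1).choose p : ℝ)) * (if m = p then (p ! : ℝ) else 0) := by
        intro p hp
        rw [fwdDiff_iter_const_smul]
        have hple : p ≤ m := le_trans (Nat.lt_succ_iff.mp (Finset.mem_range.mp hp)) hjm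
        rw [Pi.smul_apply, smul_eq_mul, IH p (Finset.mem_range.mp hp) m hple y]
      rw [Finset.sum_congr rfl hcong]
      simp only [mul_ite, mul_zero]
      rw [Finset.sum_ite_eq (range (j+1)) m (fun p => ((j+1).choose p : ℝ) * (p ! : ℝ))]
      by_cases hmj : m = j
      · subst hmj
        simp only [Finset.mem_range, lt_succ_self, if_true]
        rw [Nat.choose_succ_self_right]
        push_cast [Nat.factorial_succ]
        ring
      · have h1 : m ∉ range (j+1) := by simp only [Finset.mem_range]; omega
        rw [if_neg h1, if_neg (by omega)]

lemma comb_sum (n j : ℕ) (hj : j ≤ n) :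
    ∑ i ∈ range (n+1), (n.choose i : ℝ) * (-1)^i * ((i:ℝ))^j
      = if j = n then (-1 : ℝ)^n * (n ! : ℝ) else 0 := by
  have h := fwdDiff_iter_eq_sum_shift (1 : ℕ) (fun x : ℕ ↦ ((x:ℝ))^j) n 0
  rw [fd_pow j n hj 0] at h
  have h2 : ∑ i ∈ range (n+1), ((-1 : ℤ)^(n-i) * (n.choose i : ℤ)) • (((0 + i • 1 : ℕ) : ℝ))^j
      = ∑ i ∈ range (n+1), (-1 : ℝ)^(n-i) * (n.choose i : ℝ) * ((i:ℝ))^j := by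
    refine Finset.sum_congr rfl fun i _ => ?_
    simp [zsmul_eq_mul]
  rw [h2] at h
  have key : ∀ i ∈ range (n+1), (n.choose i : ℝ) * (-1)^i * ((i:ℝ))^j
      = (-1 : ℝ)^n * ((-1 : ℝ)^(n-i) * (n.choose i : ℝ) * ((i:ℝ))^j) := by
    intro i hi
    have hin : i ≤ n := Nat.lt_succ_iff.mp (Finset.mem_range.mp hi)
    have hpow : (-1 : ℝ)^n = (-1)^(n-i) * (-1)^i := by
      rw [← pow_add, Nat.sub_add_cancel hin]
    have hsq : ((-1 : ℝ)^(n-i)) * ((-1 : ℝ)^(n-i)) = 1 := by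
      rw [← pow_add]; exact Even.neg_one_pow ⟨n - i, rfl⟩
    rw [hpow]
    linear_combination (-((n.choose i : ℝ) * (-1 : ℝ)^i * ((i:ℝ))^j)) * hsq
  rw [Finset.sum_congr rfl key, ← Finset.mul_sum, ← h]
  by_cases hjn : j = n
  · subst hjn; simp
  · rw [if_neg hjn, if_neg (fun hh => hjn hh.symm), mul_zero]


lemma iter_within_eq (f : ℝ → ℝ) (N : ℕ) (U s : Set ℝ) (hU : IsOpen U) (hsub : s ⊆ U)
    (hs : UniqueDiffOn ℝ s)
    (hf : ∀ i < N, DifferentiableOn ℝ (iteratedDeriv i f) U) :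
    ∀ m ≤ N, ∀ x ∈ s, iteratedDerivWithin m f s x = iteratedDeriv m f x := by
  intro m
  induction m with
  | zero => intro _ x hx; simp
  | succ m ih =>
    intro hm x hx
    rw [iteratedDerivWithin_succ]
    rw [derivWithin_congr (fun y hy => ih (le_of_lt (Nat.lt_of_succ_le hm)) y hy)
      (ih (le_of_lt (Nat.lt_of_succ_le hm)) x hx)]
    rw [DifferentiableAt.derivWithin ?_ (hs x hx), ← iteratedDeriv_succ]
    exact ((hf m hm).differentiableAt (hU.mem_nhds (hsub hx)))

/-- Forward one-sided Taylor with Lagrange remainder, in `iteratedDeriv` form. -/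
lemma taylor_fwd (n : ℕ) (a b : ℝ) (f : ℝ → ℝ)
    (hf : ∀ i ≤ n, DifferentiableOn ℝ (iteratedDeriv i f) (Set.Ioo a b))
    (x₀ x : ℝ) (hx₀ : x₀ ∈ Set.Ioo a b) (hx : x ∈ Set.Ioo a b) (hlt : x₀ < x) :
    ∃ ξ ∈ Set.Ioo x₀ x,
      f x = (∑ j ∈ Finset.range (n+1), iteratedDeriv j f x₀ * (x - x₀)^j / (j.factorial : ℝ))
        + iteratedDeriv (n+1) f ξ * (x - x₀)^(n+1) / ((n+1).factorial : ℝ) := by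
  have hsub : Set.Icc x₀ x ⊆ Set.Ioo a b := Set.Icc_subset_Ioo hx₀.1 hx.2
  have hud : UniqueDiffOn ℝ (Set.Icc x₀ x) := uniqueDiffOn_Icc hlt
  have key := iter_within_eq f (n+1) (Set.Ioo a b) (Set.Icc x₀ x) isOpen_Ioo hsub hud
    (fun i hi => hf i (Nat.lt_succ_iff.mp hi))
  have hcd : ContDiffOn ℝ n f (Set.Icc x₀ x) := by
    apply contDiffOn_of_differentiableOn_deriv
    intro m hm
    have hmn : m ≤ n := by exact_mod_cast hm
    exact ((hf m hmn).mono hsub).congr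
      (fun y hy => key m (le_trans hmn (Nat.le_succ n)) y hy)
  have hf' : DifferentiableOn ℝ (iteratedDerivWithin n f (Set.Icc x₀ x)) (Set.Ioo x₀ x) := by
    refine ((hf n le_rfl).mono (fun y hy => hsub (Set.Ioo_subset_Icc_self hy))).congr ?_
    exact fun y hy => key n (Nat.le_succ n) y (Set.Ioo_subset_Icc_self hy)
  obtain ⟨ξ, hξ, heq⟩ := taylor_mean_remainder_lagrange (ne_of_lt hlt)
    (by rwa [Set.uIcc_of_le hlt.le]) (by rwa [Set.uIcc_of_le hlt.le, Set.uIoo_of_le hlt.le])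
  rw [Set.uIcc_of_le hlt.le] at heq
  rw [Set.uIoo_of_le hlt.le] at hξ
  refine ⟨ξ, hξ, ?_⟩
  rw [taylor_within_apply] at heq
  have hsum : ∑ j ∈ Finset.range (n+1),
        (((j.factorial : ℝ))⁻¹ * (x - x₀)^j) • iteratedDerivWithin j f (Set.Icc x₀ x) x₀
      = ∑ j ∈ Finset.range (n+1), iteratedDeriv j f x₀ * (x - x₀)^j / (j.factorial : ℝ) := by
    refine Finset.sum_congr rfl fun j hj => ?_
    rw [key j (le_trans (Nat.lt_succ_iff.mp (Finset.mem_range.mp hj)) (Nat.le_succ n))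
      x₀ (Set.left_mem_Icc.mpr (le_of_lt hlt)), smul_eq_mul]
    ring
  rw [hsum] at heq
  rw [key (n+1) le_rfl ξ (Set.Ioo_subset_Icc_self hξ)] at heq
  linarith [heq]

/-- Two-sided Taylor with Lagrange remainder. -/
lemma taylor_two (n : ℕ) (a b : ℝ) (f : ℝ → ℝ)
    (hf : ∀ i ≤ n, DifferentiableOn ℝ (iteratedDeriv i f) (Set.Ioo a b))
    (x₀ x : ℝ) (hx₀ : x₀ ∈ Set.Ioo a b) (hx : x ∈ Set.Ioo a b) (hne : x ≠ x₀) :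
    ∃ ξ ∈ Set.Ioo (min x₀ x) (max x₀ x),
      f x = (∑ j ∈ Finset.range (n+1), iteratedDeriv j f x₀ * (x - x₀)^j / (j.factorial : ℝ))
        + iteratedDeriv (n+1) f ξ * (x - x₀)^(n+1) / ((n+1).factorial : ℝ) := by
  rcases lt_or_gt_of_ne hne with hlt | hgt
  · -- x < x₀ : reflect
    set g : ℝ → ℝ := fun t ↦ f (-t) with hg
    have hgiter : ∀ i : ℕ, ∀ t : ℝ, iteratedDeriv i g t = (-1 : ℝ)^i * iteratedDeriv i f (-t) := by
      intro i t
      rw [hg, iteratedDeriv_comp_neg, smul_eq_mul]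
    have hgf : ∀ i ≤ n, DifferentiableOn ℝ (iteratedDeriv i g) (Set.Ioo (-b) (-a)) := by
      intro i hi
      have hdi : DifferentiableOn ℝ (fun t : ℝ ↦ iteratedDeriv i f (-t)) (Set.Ioo (-b) (-a)) := by
        refine DifferentiableOn.comp (hf i hi) (differentiable_neg.differentiableOn) ?_
        intro t ht
        exact ⟨by linarith [ht.2], by linarith [ht.1]⟩
      exact (hdi.const_smul ((-1 : ℝ)^i)).congr (fun t ht => by
        rw [hgiter i t]; simp [smul_eq_mul])
    have hmem1 : -x₀ ∈ Set.Ioo (-b) (-a) := ⟨by linarith [hx₀.2], by linarith [hx₀.1]⟩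
    have hmem2 : -x ∈ Set.Ioo (-b) (-a) := ⟨by linarith [hx.2], by linarith [hx.1]⟩
    obtain ⟨η, hη, heq⟩ := taylor_fwd n (-b) (-a) g hgf (-x₀) (-x) hmem1 hmem2 (by linarith)
    refine ⟨-η, ?_, ?_⟩
    · rw [min_eq_right (le_of_lt hlt), max_eq_left (le_of_lt hlt)]
      exact ⟨by linarith [hη.2], by linarith [hη.1]⟩
    · have hgx : g (-x) = f x := by rw [hg]; simp
      rw [hgx] at heq
      rw [heq]
      have hterm : ∀ j ∈ Finset.range (n+1),
          iteratedDeriv j g (-x₀) * (-x - -x₀)^j / (j.factorial : ℝ)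
          = iteratedDeriv j f x₀ * (x - x₀)^j / (j.factorial : ℝ) := by
        intro j _
        rw [hgiter j (-x₀), neg_neg]
        have : (-x - -x₀ : ℝ)^j = (-1 : ℝ)^j * (x - x₀)^j := by
          rw [← neg_one_mul, ← mul_pow]; ring_nf
        rw [this]
        have hsq : (-1 : ℝ)^j * (-1 : ℝ)^j = 1 := by
          rw [← pow_add]; exact Even.neg_one_pow ⟨j, rfl⟩
        field_simp
        linear_combination (iteratedDeriv j f x₀) * hsq
      rw [Finset.sum_congr rfl hterm]
      congr 1
      rw [hgiter (n+1) η]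
      have : (-x - -x₀ : ℝ)^(n+1) = (-1 : ℝ)^(n+1) * (x - x₀)^(n+1) := by
        rw [← neg_one_mul, ← mul_pow]; ring_nf
      rw [this]
      have hsq : (-1 : ℝ)^(n+1) * (-1 : ℝ)^(n+1) = 1 := by
        rw [← pow_add]; exact Even.neg_one_pow ⟨n+1, rfl⟩
      field_simp
      linear_combination (iteratedDeriv (n+1) f (-η)) * hsq
  · obtain ⟨ξ, hξ, heq⟩ := taylor_fwd n a b f hf x₀ x hx₀ hx hgt
    exact ⟨ξ, by rwa [min_eq_left (le_of_lt hgt), max_eq_right (le_of_lt hgt)], heq⟩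

end aux

/-- The case x = x₀ of the finite-difference representation of fⁿ with
Lagrange error terms. -/
theorem stmt_17 (n : ℕ) (a b : ℝ) (f : ℝ → ℝ)
    (hf : ∀ i ≤ n, DifferentiableOn ℝ (iteratedDeriv i f) (Set.Ioo a b))
    (x₀ : ℝ) (hx₀ : x₀ ∈ Set.Ioo a b) (k : ℝ) (hk : k ≠ 0)
    (hmem : ∀ i ≤ n, x₀ + (i : ℝ) * k ∈ Set.Ioo a b) :
    ∃ ξ : ℕ → ℝ,
      (∀ i, 1 ≤ i → i ≤ n →
        ξ i ∈ Set.Ioo (min x₀ (x₀ + (i : ℝ) * k)) (max x₀ (x₀ + (i : ℝ) * k))) ∧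
      iteratedDeriv n f x₀ * (-k) ^ n =
        (∑ i ∈ Finset.range (n + 1), (n.choose i : ℝ) * (-1) ^ i * f (x₀ + (i : ℝ) * k)) -
        ∑ i ∈ Finset.Icc 1 n, (n.choose i : ℝ) * (-1) ^ i *
          (iteratedDeriv (n + 1) f (ξ i) / ((n + 1).factorial : ℝ)) *
          ((i : ℝ) * k) ^ (n + 1) := by
  have hexists : ∀ i : ℕ, ∃ c : ℝ, 1 ≤ i → i ≤ n →
      (c ∈ Set.Ioo (min x₀ (x₀ + (i : ℝ) * k)) (max x₀ (x₀ + (i : ℝ) * k))) ∧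
      f (x₀ + (i : ℝ) * k) =
        (∑ j ∈ Finset.range (n+1),
          iteratedDeriv j f x₀ * ((x₀ + (i : ℝ) * k) - x₀)^j / (j.factorial : ℝ))
        + iteratedDeriv (n+1) f c * ((x₀ + (i : ℝ) * k) - x₀)^(n+1) / ((n+1).factorial : ℝ) := by
    intro i
    by_cases hi : 1 ≤ i ∧ i ≤ n
    · have hne : x₀ + (i : ℝ) * k ≠ x₀ := by
        have : (i : ℝ) ≠ 0 := Nat.cast_ne_zero.mpr (by omega)
        intro hcon
        apply mul_ne_zero this hk
        linarith [hcon]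
      obtain ⟨c, hc1, hc2⟩ := taylor_two n a b f hf x₀ (x₀ + (i : ℝ) * k) hx₀
        (hmem i hi.2) hne
      exact ⟨c, fun _ _ => ⟨hc1, hc2⟩⟩
    · exact ⟨0, fun h1 h2 => absurd ⟨h1, h2⟩ hi⟩
  choose ξ hξ using hexists
  refine ⟨ξ, fun i h1 h2 => (hξ i h1 h2).1, ?_⟩
  -- pointwise Taylor identity, valid also at i = 0
  have hT : ∀ i ∈ Finset.range (n+1), f (x₀ + (i : ℝ) * k) =
      (∑ j ∈ Finset.range (n+1), iteratedDeriv j f x₀ * ((i : ℝ) * k)^j / (j.factorial : ℝ))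
      + iteratedDeriv (n+1) f (ξ i) * ((i : ℝ) * k)^(n+1) / ((n+1).factorial : ℝ) := by
    intro i hi
    rcases Nat.eq_zero_or_pos i with rfl | hpos
    · simp only [Nat.cast_zero, zero_mul, add_zero]
      rw [zero_pow (Nat.succ_ne_zero n), mul_zero, zero_div, add_zero]
      rw [Finset.sum_eq_single 0]
      · simp
      · intro j _ hj
        rw [zero_pow hj, mul_zero, zero_div]
      · intro h; exact absurd (Finset.mem_range.mpr (Nat.succ_pos n)) h
    · have h2 := (hξ i hpos (Nat.lt_succ_iff.mp (Finset.mem_range.mp hi))).2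
      rw [h2]
      simp only [add_sub_cancel_left]
  -- expand the alternating sum
  have hmain : ∑ i ∈ Finset.range (n + 1), (n.choose i : ℝ) * (-1) ^ i * f (x₀ + (i : ℝ) * k)
      = iteratedDeriv n f x₀ * (-k) ^ n
        + ∑ i ∈ Finset.range (n + 1), (n.choose i : ℝ) * (-1) ^ i *
            (iteratedDeriv (n+1) f (ξ i) * ((i : ℝ) * k)^(n+1) / ((n+1).factorial : ℝ)) := by
    rw [Finset.sum_congr rfl (fun i hi => by rw [hT i hi])]
    have hsplit : ∀ i ∈ Finset.range (n+1),
        (n.choose i : ℝ) * (-1) ^ i *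
          ((∑ j ∈ Finset.range (n+1),
              iteratedDeriv j f x₀ * ((i : ℝ) * k)^j / (j.factorial : ℝ))
            + iteratedDeriv (n+1) f (ξ i) * ((i : ℝ) * k)^(n+1) / ((n+1).factorial : ℝ))
        = (∑ j ∈ Finset.range (n+1), (n.choose i : ℝ) * (-1) ^ i *
              (iteratedDeriv j f x₀ * ((i : ℝ) * k)^j / (j.factorial : ℝ)))
          + (n.choose i : ℝ) * (-1) ^ i *
              (iteratedDeriv (n+1) f (ξ i) * ((i : ℝ) * k)^(n+1) / ((n+1).factorial : ℝ)) := by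
      intro i _
      rw [mul_add, Finset.mul_sum]
    rw [Finset.sum_congr rfl hsplit, Finset.sum_add_distrib]
    congr 1
    rw [Finset.sum_comm]
    have hinner : ∀ j ∈ Finset.range (n+1),
        ∑ i ∈ Finset.range (n+1), (n.choose i : ℝ) * (-1) ^ i *
            (iteratedDeriv j f x₀ * ((i : ℝ) * k)^j / (j.factorial : ℝ))
        = (iteratedDeriv j f x₀ * k^j / (j.factorial : ℝ)) *
            (if j = n then (-1 : ℝ)^n * (n.factorial : ℝ) else 0) := by
      intro j hj
      rw [← comb_sum n j (Nat.lt_succ_iff.mp (Finset.mem_range.mp hj)), Finset.mul_sum]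
      refine Finset.sum_congr rfl fun i _ => ?_
      rw [mul_pow]
      ring
    rw [Finset.sum_congr rfl hinner]
    simp only [mul_ite, mul_zero]
    rw [Finset.sum_ite_eq' (Finset.range (n+1)) n
      (fun j => iteratedDeriv j f x₀ * k^j / (j.factorial : ℝ) * ((-1 : ℝ)^n * (n.factorial : ℝ)))]
    rw [if_pos (Finset.mem_range.mpr (Nat.lt_succ_self n))]
    have hfac : (n.factorial : ℝ) ≠ 0 := Nat.cast_ne_zero.mpr n.factorial_ne_zero
    field_simp
    rw [neg_pow k n]
    ring
  rw [hmain]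
  have hrem : ∑ i ∈ Finset.range (n + 1), (n.choose i : ℝ) * (-1) ^ i *
        (iteratedDeriv (n+1) f (ξ i) * ((i : ℝ) * k)^(n+1) / ((n+1).factorial : ℝ))
      = ∑ i ∈ Finset.Icc 1 n, (n.choose i : ℝ) * (-1) ^ i *
          (iteratedDeriv (n + 1) f (ξ i) / ((n + 1).factorial : ℝ)) *
          ((i : ℝ) * k) ^ (n + 1) := by
    rw [← Finset.sum_subset (s₁ := Finset.Icc 1 n) (fun i hi => by
        simp only [Finset.mem_Icc] at hi
        exact Finset.mem_range.mpr (Nat.lt_succ_of_le hi.2))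
      (fun i hi hni => by
        have : i = 0 := by
          simp only [Finset.mem_range] at hi
          simp only [Finset.mem_Icc] at hni
          omega
        subst this
        simp)]
    refine Finset.sum_congr rfl fun i _ => ?_
    ring
  rw [hrem]
  ring
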